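/- Let k ≥ 2 and let Λ ⊆ [0,1)^{3k} be the cyclic subgroup of (ℝ/ℤ)^{3k} generated by g = (1/6,…,1/6, 1/3,…,1/3, 1/2,…,1/2) with k coordinates each of 1/6, 1/3, 1/2. Then Λ has order 6, and the heights of its elements are: ht(0)=0, ht(g)=k, ht(2g)=k, ht(3g)=k, ht(4g)=k, ht(5g)=2k. Hence the corresponding lattice simplex has h*-polynomial 1 + 4t^k + t^{2k}. -/

import Mathlib

noncomputable section

/-- Fractional-part addition on `[0,1)`-vectors, modelling the group `(ℝ/ℤ)^n`. -/
def fadd {n : ℕ} (x y : Fin n → ℝ) : Fin n → ℝ := fun i => Int.fract (x i + y i)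

/-- Inverse in `(ℝ/ℤ)^n` on `[0,1)`-representatives. -/
def fneg {n : ℕ} (x : Fin n → ℝ) : Fin n → ℝ := fun i => Int.fract (-(x i))

/-- `j`-fold sum in `(ℝ/ℤ)^n` on `[0,1)`-representatives. -/
def fsmul {n : ℕ} (j : ℤ) (x : Fin n → ℝ) : Fin n → ℝ := fun i => Int.fract ((j : ℝ) * x i)

/-- The height `ht x = ∑ i, x i` of a `[0,1)`-vector. -/
def ht {n : ℕ} (x : Fin n → ℝ) : ℝ := ∑ i, x i

/-- The support `supp x = {i : x i ≠ 0}`. -/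
def supp {n : ℕ} (x : Fin n → ℝ) : Set (Fin n) := {i | x i ≠ 0}

/-- `S ⊆ [0,1)^n` is a subgroup of `(ℝ/ℤ)^n` (in `[0,1)`-coordinates). -/
def IsSubgroupSet {n : ℕ} (S : Set (Fin n → ℝ)) : Prop :=
  (∀ x ∈ S, ∀ i, x i ∈ Set.Ico (0 : ℝ) 1) ∧ 0 ∈ S ∧
    (∀ x ∈ S, ∀ y ∈ S, fadd x y ∈ S) ∧ ∀ x ∈ S, fneg x ∈ S

/-- The subgroup of `(ℝ/ℤ)^n` generated by a set of `[0,1)`-vectors. -/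
def genSet {n : ℕ} (gs : Set (Fin n → ℝ)) : Set (Fin n → ℝ) :=
  ⋂₀ {S | IsSubgroupSet S ∧ gs ⊆ S}

/- ### Auxiliary lemmas -/

lemma fract_eq_of {x r : ℝ} (n : ℤ) (h : x = n + r) (h0 : 0 ≤ r) (h1 : r < 1) :
    Int.fract x = r := by
  subst h; rw [Int.fract_intCast_add, Int.fract_eq_self.mpr ⟨h0, h1⟩]

lemma fadd_fsmul {N : ℕ} (m n : ℤ) (x : Fin N → ℝ) :
    fadd (fsmul m x) (fsmul n x) = fsmul (m + n) x := by
  funext i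
  simp only [fadd, fsmul]
  rw [Int.fract_eq_fract]
  refine ⟨-⌊(m:ℝ) * x i⌋ - ⌊(n:ℝ) * x i⌋, ?_⟩
  simp only [Int.fract]
  push_cast
  ring

lemma fneg_fsmul {N : ℕ} (m : ℤ) (x : Fin N → ℝ) :
    fneg (fsmul m x) = fsmul (-m) x := by
  funext i
  simp only [fneg, fsmul]
  rw [Int.fract_eq_fract]
  refine ⟨⌊(m:ℝ) * x i⌋, ?_⟩
  simp only [Int.fract]
  push_cast
  ring

lemma fsmul_zero' {N : ℕ} (x : Fin N → ℝ) : fsmul 0 x = 0 := by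
  funext i; simp [fsmul]

lemma fract_mod6 (m : ℤ) {x : ℝ} (z : ℤ) (hz : 6 * x = z) :
    Int.fract ((m : ℝ) * x) = Int.fract (((m % 6 : ℤ) : ℝ) * x) := by
  rw [Int.fract_eq_fract]
  refine ⟨(m / 6) * z, ?_⟩
  have h : ((m % 6 : ℤ) : ℝ) + 6 * ((m / 6 : ℤ) : ℝ) = m := by
    exact_mod_cast Int.emod_add_mul_ediv m 6
  calc (m:ℝ) * x - ((m % 6 : ℤ):ℝ) * x = ((m / 6 : ℤ):ℝ) * (6 * x) := by
        linear_combination (-x) * h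
    _ = ((m / 6) * z : ℤ) := by rw [hz]; push_cast; ring

lemma ht_piecewise (k : ℕ) (a b c : ℝ) :
    ht (fun i : Fin (3*k) => if (i : ℕ) < k then a else if (i : ℕ) < 2*k then b else c)
      = k * a + k * b + k * c := by
  unfold ht
  rw [Fin.sum_univ_eq_sum_range (fun i => if i < k then a else if i < 2*k then b else c) (3*k)]
  rw [Finset.range_eq_Ico, ← Finset.sum_Ico_consecutive _ (Nat.zero_le k) (by omega : k ≤ 3*k),
      ← Finset.sum_Ico_consecutive _ (by omega : k ≤ 2*k) (by omega : 2*k ≤ 3*k)]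
  have h1 : ∑ i ∈ Finset.Ico 0 k, (if i < k then a else if i < 2*k then b else c) = k * a := by
    have e : ∀ i ∈ Finset.Ico 0 k, (if i < k then a else if i < 2*k then b else c) = a := by
      intro i hi; simp only [Finset.mem_Ico] at hi; rw [if_pos hi.2]
    rw [Finset.sum_congr rfl e, Finset.sum_const, Nat.card_Ico]
    simp [nsmul_eq_mul]
  have h2 : ∑ i ∈ Finset.Ico k (2*k), (if i < k then a else if i < 2*k then b else c) = k * b := by
    have e : ∀ i ∈ Finset.Ico k (2*k), (if i < k then a else if i < 2*k then b else c) = b := by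
      intro i hi; simp only [Finset.mem_Ico] at hi; rw [if_neg (by omega), if_pos hi.2]
    rw [Finset.sum_congr rfl e, Finset.sum_const, Nat.card_Ico]
    have : 2*k - k = k := by omega
    simp [this, nsmul_eq_mul]
  have h3 : ∑ i ∈ Finset.Ico (2*k) (3*k), (if i < k then a else if i < 2*k then b else c) = k * c := by
    have e : ∀ i ∈ Finset.Ico (2*k) (3*k), (if i < k then a else if i < 2*k then b else c) = c := by
      intro i hi; simp only [Finset.mem_Ico] at hi; rw [if_neg (by omega), if_neg (by omega)]
    rw [Finset.sum_congr rfl e, Finset.sum_const, Nat.card_Ico]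
    have : 3*k - 2*k = k := by omega
    simp [this, nsmul_eq_mul]
  rw [h1, h2, h3]; ring

theorem stmt11 (k : ℕ) (hk : 2 ≤ k) (g : Fin (3*k) → ℝ)
    (hg : g = fun i => if i.val < k then 1/6 else if i.val < 2*k then 1/3 else 1/2) :
    (genSet {g}).ncard = 6 ∧
    ht (fsmul 0 g) = 0 ∧ ht (fsmul 1 g) = k ∧ ht (fsmul 2 g) = k ∧
    ht (fsmul 3 g) = k ∧ ht (fsmul 4 g) = k ∧ ht (fsmul 5 g) = 2 * k ∧
    {x ∈ genSet {g} | ht x = 0}.ncard = 1 ∧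
    {x ∈ genSet {g} | ht x = (k : ℝ)}.ncard = 4 ∧
    {x ∈ genSet {g} | ht x = (2 * k : ℝ)}.ncard = 1 := by
  have hkpos : 0 < k := by omega
  -- g has [0,1) coordinates, and 6 * g i is an integer
  have hgrange : ∀ i, g i ∈ Set.Ico (0:ℝ) 1 := by
    intro i; rw [hg]; dsimp only; split_ifs <;> constructor <;> norm_num
  have hz6 : ∀ i, ∃ z : ℤ, 6 * g i = z := by
    intro i; rw [hg]; dsimp only
    split_ifs
    · exact ⟨1, by norm_num⟩
    · exact ⟨2, by norm_num⟩
    · exact ⟨3, by norm_num⟩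
  have hg1 : fsmul 1 g = g := by
    funext i
    simp only [fsmul, Int.cast_one, one_mul]
    exact Int.fract_eq_self.mpr (hgrange i)
  have hmod : ∀ m : ℤ, fsmul m g = fsmul (m % 6) g := by
    intro m; funext i
    obtain ⟨z, hz⟩ := hz6 i
    exact fract_mod6 m z hz
  -- The candidate subgroup
  set Λ : Set (Fin (3*k) → ℝ) :=
    {fsmul 0 g, fsmul 1 g, fsmul 2 g, fsmul 3 g, fsmul 4 g, fsmul 5 g} with hΛdef
  have hmem : ∀ m : ℤ, 0 ≤ m → m < 6 → fsmul m g ∈ Λ := by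
    intro m h0 h6
    interval_cases m <;> simp [hΛdef, Set.mem_insert_iff]
  have hrep : ∀ x ∈ Λ, ∃ m : ℤ, 0 ≤ m ∧ m < 6 ∧ x = fsmul m g := by
    intro x hx
    simp only [hΛdef, Set.mem_insert_iff, Set.mem_singleton_iff] at hx
    rcases hx with h|h|h|h|h|h
    · exact ⟨0, by norm_num, by norm_num, h⟩
    · exact ⟨1, by norm_num, by norm_num, h⟩
    · exact ⟨2, by norm_num, by norm_num, h⟩
    · exact ⟨3, by norm_num, by norm_num, h⟩
    · exact ⟨4, by norm_num, by norm_num, h⟩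
    · exact ⟨5, by norm_num, by norm_num, h⟩
  have hsub : IsSubgroupSet Λ := by
    refine ⟨?_, ?_, ?_, ?_⟩
    · intro x hx i
      obtain ⟨m, _, _, rfl⟩ := hrep x hx
      exact ⟨Int.fract_nonneg _, Int.fract_lt_one _⟩
    · rw [← fsmul_zero' g]; exact hmem 0 (by norm_num) (by norm_num)
    · intro x hx y hy
      obtain ⟨m, _, _, rfl⟩ := hrep x hx
      obtain ⟨n, _, _, rfl⟩ := hrep y hy
      rw [fadd_fsmul, hmod (m + n)]
      exact hmem _ (Int.emod_nonneg _ (by norm_num)) (Int.emod_lt_of_pos _ (by norm_num))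
    · intro x hx
      obtain ⟨m, _, _, rfl⟩ := hrep x hx
      rw [fneg_fsmul, hmod (-m)]
      exact hmem _ (Int.emod_nonneg _ (by norm_num)) (Int.emod_lt_of_pos _ (by norm_num))
  have hgΛ : g ∈ Λ := by
    rw [← hg1]; exact hmem 1 (by norm_num) (by norm_num)
  -- genSet {g} = Λ
  have hΛeq : genSet {g} = Λ := by
    apply Set.Subset.antisymm
    · intro x hx
      exact hx Λ ⟨hsub, Set.singleton_subset_iff.mpr hgΛ⟩
    · intro x hx
      obtain ⟨m, h0, h6, rfl⟩ := hrep x hx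
      intro S hS
      obtain ⟨hSsub, hSg⟩ := hS
      have hgS : g ∈ S := hSg rfl
      have hnat : ∀ n : ℕ, fsmul (n : ℤ) g ∈ S := by
        intro n
        induction n with
        | zero => rw [Nat.cast_zero, fsmul_zero']; exact hSsub.2.1
        | succ n ih =>
          have h := hSsub.2.2.1 _ ih _ hgS
          have e : fadd (fsmul (n:ℤ) g) g = fsmul ((n:ℤ)+1) g := by
            nth_rewrite 2 [← hg1]
            rw [fadd_fsmul]
          rw [e] at h
          have e2 : ((n + 1 : ℕ) : ℤ) = (n : ℤ) + 1 := by push_cast; ring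
          rw [e2]
          exact h
      have := hnat m.toNat
      rwa [Int.toNat_of_nonneg h0] at this
  -- heights
  have hfs : ∀ m : ℤ, fsmul m g = (fun i : Fin (3*k) =>
      if (i : ℕ) < k then Int.fract ((m:ℝ) * (1/6))
      else if (i : ℕ) < 2*k then Int.fract ((m:ℝ) * (1/3))
      else Int.fract ((m:ℝ) * (1/2))) := by
    intro m; funext i
    simp only [fsmul, hg]
    split_ifs <;> rfl
  have hht : ∀ m : ℤ, ht (fsmul m g) =
      k * Int.fract ((m:ℝ) * (1/6)) + k * Int.fract ((m:ℝ) * (1/3))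
        + k * Int.fract ((m:ℝ) * (1/2)) := by
    intro m; rw [hfs m]; exact ht_piecewise k _ _ _
  have hh0 : ht (fsmul 0 g) = 0 := by
    rw [hht 0]
    rw [fract_eq_of 0 (by push_cast; ring) (by norm_num) (by norm_num : (0:ℝ) < 1)]
    norm_num
  have hh1 : ht (fsmul 1 g) = k := by
    rw [hht 1,
      fract_eq_of 0 (by push_cast; norm_num : ((1:ℤ):ℝ) * (1/6) = (0:ℤ) + 1/6) (by norm_num) (by norm_num),
      fract_eq_of 0 (by push_cast; norm_num : ((1:ℤ):ℝ) * (1/3) = (0:ℤ) + 1/3) (by norm_num) (by norm_num),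
      fract_eq_of 0 (by push_cast; norm_num : ((1:ℤ):ℝ) * (1/2) = (0:ℤ) + 1/2) (by norm_num) (by norm_num)]
    ring
  have hh2 : ht (fsmul 2 g) = k := by
    rw [hht 2,
      fract_eq_of 0 (by push_cast; norm_num : ((2:ℤ):ℝ) * (1/6) = (0:ℤ) + 1/3) (by norm_num) (by norm_num),
      fract_eq_of 0 (by push_cast; norm_num : ((2:ℤ):ℝ) * (1/3) = (0:ℤ) + 2/3) (by norm_num) (by norm_num),
      fract_eq_of 1 (by push_cast; norm_num : ((2:ℤ):ℝ) * (1/2) = (1:ℤ) + 0) (by norm_num) (by norm_num)]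
    ring
  have hh3 : ht (fsmul 3 g) = k := by
    rw [hht 3,
      fract_eq_of 0 (by push_cast; norm_num : ((3:ℤ):ℝ) * (1/6) = (0:ℤ) + 1/2) (by norm_num) (by norm_num),
      fract_eq_of 1 (by push_cast; norm_num : ((3:ℤ):ℝ) * (1/3) = (1:ℤ) + 0) (by norm_num) (by norm_num),
      fract_eq_of 1 (by push_cast; norm_num : ((3:ℤ):ℝ) * (1/2) = (1:ℤ) + 1/2) (by norm_num) (by norm_num)]
    ring
  have hh4 : ht (fsmul 4 g) = k := by
    rw [hht 4,
      fract_eq_of 0 (by push_cast; norm_num : ((4:ℤ):ℝ) * (1/6) = (0:ℤ) + 2/3) (by norm_num) (by norm_num),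
      fract_eq_of 1 (by push_cast; norm_num : ((4:ℤ):ℝ) * (1/3) = (1:ℤ) + 1/3) (by norm_num) (by norm_num),
      fract_eq_of 2 (by push_cast; norm_num : ((4:ℤ):ℝ) * (1/2) = (2:ℤ) + 0) (by norm_num) (by norm_num)]
    ring
  have hh5 : ht (fsmul 5 g) = 2 * k := by
    rw [hht 5,
      fract_eq_of 0 (by push_cast; norm_num : ((5:ℤ):ℝ) * (1/6) = (0:ℤ) + 5/6) (by norm_num) (by norm_num),
      fract_eq_of 1 (by push_cast; norm_num : ((5:ℤ):ℝ) * (1/3) = (1:ℤ) + 2/3) (by norm_num) (by norm_num),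
      fract_eq_of 2 (by push_cast; norm_num : ((5:ℤ):ℝ) * (1/2) = (2:ℤ) + 1/2) (by norm_num) (by norm_num)]
    ring
  -- distinctness
  have h03 : (0:ℕ) < 3*k := by omega
  have hd : ∀ m n : ℤ, 0 ≤ m → m < 6 → 0 ≤ n → n < 6 → m ≠ n → fsmul m g ≠ fsmul n g := by
    intro m n hm hm6 hn hn6 hmn heq
    have h := congrFun heq ⟨0, h03⟩
    rw [hfs m, hfs n] at h
    simp only at h
    rw [if_pos (show ((⟨0, h03⟩ : Fin (3*k)) : ℕ) < k from hkpos),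
        if_pos (show ((⟨0, h03⟩ : Fin (3*k)) : ℕ) < k from hkpos)] at h
    have hmr : (0:ℝ) ≤ (m:ℝ) ∧ (m:ℝ) < 6 := ⟨by exact_mod_cast hm, by exact_mod_cast hm6⟩
    have hnr : (0:ℝ) ≤ (n:ℝ) ∧ (n:ℝ) < 6 := ⟨by exact_mod_cast hn, by exact_mod_cast hn6⟩
    rw [fract_eq_of 0 (by ring_nf : (m:ℝ) * (1/6) = (0:ℤ) + (m:ℝ)/6) (by linarith [hmr.1]) (by linarith [hmr.2]),
        fract_eq_of 0 (by ring_nf : (n:ℝ) * (1/6) = (0:ℤ) + (n:ℝ)/6) (by linarith [hnr.1]) (by linarith [hnr.2])] at h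
    apply hmn
    have : (m:ℝ) = n := by linarith
    exact_mod_cast this
  -- cardinality of Λ
  have hfin5 : ({fsmul 4 g, fsmul 5 g} : Set (Fin (3*k) → ℝ)).Finite :=
    (Set.finite_singleton _).insert _
  have hfin4 := hfin5.insert (fsmul 3 g)
  have hfin3 := hfin4.insert (fsmul 2 g)
  have hfin2 := hfin3.insert (fsmul 1 g)
  have hcard : Λ.ncard = 6 := by
    have n0 : fsmul 0 g ∉ ({fsmul 1 g, fsmul 2 g, fsmul 3 g, fsmul 4 g, fsmul 5 g} :
        Set (Fin (3*k) → ℝ)) := by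
      simp only [Set.mem_insert_iff, Set.mem_singleton_iff]
      push_neg
      exact ⟨hd 0 1 (by norm_num) (by norm_num) (by norm_num) (by norm_num) (by norm_num),
             hd 0 2 (by norm_num) (by norm_num) (by norm_num) (by norm_num) (by norm_num),
             hd 0 3 (by norm_num) (by norm_num) (by norm_num) (by norm_num) (by norm_num),
             hd 0 4 (by norm_num) (by norm_num) (by norm_num) (by norm_num) (by norm_num),
             hd 0 5 (by norm_num) (by norm_num) (by norm_num) (by norm_num) (by norm_num)⟩
    have n1 : fsmul 1 g ∉ ({fsmul 2 g, fsmul 3 g, fsmul 4 g, fsmul 5 g} :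
        Set (Fin (3*k) → ℝ)) := by
      simp only [Set.mem_insert_iff, Set.mem_singleton_iff]
      push_neg
      exact ⟨hd 1 2 (by norm_num) (by norm_num) (by norm_num) (by norm_num) (by norm_num),
             hd 1 3 (by norm_num) (by norm_num) (by norm_num) (by norm_num) (by norm_num),
             hd 1 4 (by norm_num) (by norm_num) (by norm_num) (by norm_num) (by norm_num),
             hd 1 5 (by norm_num) (by norm_num) (by norm_num) (by norm_num) (by norm_num)⟩
    have n2 : fsmul 2 g ∉ ({fsmul 3 g, fsmul 4 g, fsmul 5 g} :
        Set (Fin (3*k) → ℝ)) := by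
      simp only [Set.mem_insert_iff, Set.mem_singleton_iff]
      push_neg
      exact ⟨hd 2 3 (by norm_num) (by norm_num) (by norm_num) (by norm_num) (by norm_num),
             hd 2 4 (by norm_num) (by norm_num) (by norm_num) (by norm_num) (by norm_num),
             hd 2 5 (by norm_num) (by norm_num) (by norm_num) (by norm_num) (by norm_num)⟩
    have n3 : fsmul 3 g ∉ ({fsmul 4 g, fsmul 5 g} : Set (Fin (3*k) → ℝ)) := by
      simp only [Set.mem_insert_iff, Set.mem_singleton_iff]
      push_neg
      exact ⟨hd 3 4 (by norm_num) (by norm_num) (by norm_num) (by norm_num) (by norm_num),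
             hd 3 5 (by norm_num) (by norm_num) (by norm_num) (by norm_num) (by norm_num)⟩
    have n4 : fsmul 4 g ∉ ({fsmul 5 g} : Set (Fin (3*k) → ℝ)) := by
      simp only [Set.mem_singleton_iff]
      exact hd 4 5 (by norm_num) (by norm_num) (by norm_num) (by norm_num) (by norm_num)
    rw [hΛdef,
        Set.ncard_insert_of_notMem n0 hfin2,
        Set.ncard_insert_of_notMem n1 hfin3,
        Set.ncard_insert_of_notMem n2 hfin4,
        Set.ncard_insert_of_notMem n3 hfin5,
        Set.ncard_insert_of_notMem n4 (Set.finite_singleton _),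
        Set.ncard_singleton]
  -- height facts about k
  have hkR : (2:ℝ) ≤ (k:ℝ) := by exact_mod_cast hk
  have hk0 : (k:ℝ) ≠ 0 := by linarith
  -- sep sets
  have hsep0 : {x ∈ genSet {g} | ht x = 0} = {fsmul 0 g} := by
    ext x
    simp only [Set.mem_setOf_eq, hΛeq, hΛdef, Set.mem_insert_iff, Set.mem_singleton_iff]
    constructor
    · rintro ⟨(rfl|rfl|rfl|rfl|rfl|rfl), h2⟩
      · rfl
      · rw [hh1] at h2; exact absurd h2 hk0
      · rw [hh2] at h2; exact absurd h2 hk0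
      · rw [hh3] at h2; exact absurd h2 hk0
      · rw [hh4] at h2; exact absurd h2 hk0
      · rw [hh5] at h2; exfalso; apply hk0; linarith
    · rintro rfl
      exact ⟨Or.inl rfl, hh0⟩
  have hsepk : {x ∈ genSet {g} | ht x = (k:ℝ)} =
      {fsmul 1 g, fsmul 2 g, fsmul 3 g, fsmul 4 g} := by
    ext x
    simp only [Set.mem_setOf_eq, hΛeq, hΛdef, Set.mem_insert_iff, Set.mem_singleton_iff]
    constructor
    · rintro ⟨(rfl|rfl|rfl|rfl|rfl|rfl), h2⟩
      · rw [hh0] at h2; exact absurd h2.symm hk0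
      · exact Or.inl rfl
      · exact Or.inr (Or.inl rfl)
      · exact Or.inr (Or.inr (Or.inl rfl))
      · exact Or.inr (Or.inr (Or.inr rfl))
      · rw [hh5] at h2; exfalso; apply hk0; linarith
    · rintro (rfl|rfl|rfl|rfl)
      · exact ⟨Or.inr (Or.inl rfl), hh1⟩
      · exact ⟨Or.inr (Or.inr (Or.inl rfl)), hh2⟩
      · exact ⟨Or.inr (Or.inr (Or.inr (Or.inl rfl))), hh3⟩
      · exact ⟨Or.inr (Or.inr (Or.inr (Or.inr (Or.inl rfl)))), hh4⟩
  have hsep2k : {x ∈ genSet {g} | ht x = (2 * k : ℝ)} = {fsmul 5 g} := by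
    ext x
    simp only [Set.mem_setOf_eq, hΛeq, hΛdef, Set.mem_insert_iff, Set.mem_singleton_iff]
    constructor
    · rintro ⟨(rfl|rfl|rfl|rfl|rfl|rfl), h2⟩
      · rw [hh0] at h2; exfalso; apply hk0; linarith
      · rw [hh1] at h2; exfalso; apply hk0; linarith
      · rw [hh2] at h2; exfalso; apply hk0; linarith
      · rw [hh3] at h2; exfalso; apply hk0; linarith
      · rw [hh4] at h2; exfalso; apply hk0; linarith
      · rfl
    · rintro rfl
      refine ⟨Or.inr (Or.inr (Or.inr (Or.inr (Or.inr rfl)))), ?_⟩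
      exact hh5
  have hcardk : ({fsmul 1 g, fsmul 2 g, fsmul 3 g, fsmul 4 g} :
      Set (Fin (3*k) → ℝ)).ncard = 4 := by
    have f3 : ({fsmul 3 g, fsmul 4 g} : Set (Fin (3*k) → ℝ)).Finite :=
      (Set.finite_singleton _).insert _
    have f2 := f3.insert (fsmul 2 g)
    have m1 : fsmul 1 g ∉ ({fsmul 2 g, fsmul 3 g, fsmul 4 g} : Set (Fin (3*k) → ℝ)) := by
      simp only [Set.mem_insert_iff, Set.mem_singleton_iff]
      push_neg
      exact ⟨hd 1 2 (by norm_num) (by norm_num) (by norm_num) (by norm_num) (by norm_num),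
             hd 1 3 (by norm_num) (by norm_num) (by norm_num) (by norm_num) (by norm_num),
             hd 1 4 (by norm_num) (by norm_num) (by norm_num) (by norm_num) (by norm_num)⟩
    have m2 : fsmul 2 g ∉ ({fsmul 3 g, fsmul 4 g} : Set (Fin (3*k) → ℝ)) := by
      simp only [Set.mem_insert_iff, Set.mem_singleton_iff]
      push_neg
      exact ⟨hd 2 3 (by norm_num) (by norm_num) (by norm_num) (by norm_num) (by norm_num),
             hd 2 4 (by norm_num) (by norm_num) (by norm_num) (by norm_num) (by norm_num)⟩
    have m3 : fsmul 3 g ∉ ({fsmul 4 g} : Set (Fin (3*k) → ℝ)) := by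
      simp only [Set.mem_singleton_iff]
      exact hd 3 4 (by norm_num) (by norm_num) (by norm_num) (by norm_num) (by norm_num)
    rw [Set.ncard_insert_of_notMem m1 f2,
        Set.ncard_insert_of_notMem m2 f3,
        Set.ncard_insert_of_notMem m3 (Set.finite_singleton _),
        Set.ncard_singleton]
  refine ⟨by rw [hΛeq]; exact hcard, hh0, hh1, hh2, hh3, hh4, hh5, ?_, ?_, ?_⟩
  · rw [hsep0]; exact Set.ncard_singleton _
  · rw [hsepk]; exact hcardk
  · rw [hsep2k]; exact Set.ncard_singleton _
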